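/- For the star K_{1,n−1} with n ≥ 3, γ^t_StR(K_{1,n−1}) = ⌈(n−2)/2⌉ + 2, i.e., γ_t + ⌈(Δ−1)/2⌉ where γ_t = 2 and Δ = n−1. -/
import Mathlib

open Finset

variable {V : Type*} [Fintype V]

/-- The degree of a vertex. -/
noncomputable def degN (G : SimpleGraph V) (v : V) : ℕ := {u | G.Adj v u}.ncard

/-- Maximum degree. -/
noncomputable def maxDeg (G : SimpleGraph V) : ℕ := Finset.univ.sup (degN G)

/-- Minimum degree. -/
noncomputable def minDeg (G : SimpleGraph V) : ℕ := sInf {d | ∃ v, degN G v = d}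

/-- No isolated vertex. -/
def NoIsolated (G : SimpleGraph V) : Prop := ∀ v, ∃ u, G.Adj v u

/-- Total strong Roman dominating function. `(Δ+1)/2 = ⌈Δ/2⌉` and
`(m+1)/2 = ⌈m/2⌉` in natural-number arithmetic. -/
def IsTSRDF (G : SimpleGraph V) (f : V → ℕ) : Prop :=
  (∀ v, f v ≤ (maxDeg G + 1) / 2 + 1) ∧
  (∀ v, f v = 0 → ∃ u, G.Adj v u ∧
      1 + ({w | G.Adj u w ∧ f w = 0}.ncard + 1) / 2 ≤ f u) ∧
  (∀ v, 0 < f v → ∃ u, G.Adj v u ∧ 0 < f u)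

/-- The total strong Roman domination number. -/
noncomputable def tsrd (G : SimpleGraph V) : ℕ :=
  sInf {k | ∃ f : V → ℕ, IsTSRDF G f ∧ ∑ v, f v = k}

lemma ncard_eq_sum' {V : Type*} [Fintype V] (S : Set V) [DecidablePred (· ∈ S)] :
    S.ncard = ∑ v, if v ∈ S then 1 else 0 := by
  rw [Set.ncard_eq_toFinset_card']
  rw [show S.toFinset = univ.filter (· ∈ S) from by ext x; simp]
  rw [Finset.card_filter]

lemma sum_ite_ne_aux {m : ℕ} (i0 : Fin m) :
    ∑ i : Fin m, (if i = i0 then (0 : ℕ) else 1) = m - 1 := by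
  rw [← Finset.add_sum_erase Finset.univ _ (Finset.mem_univ i0)]
  rw [if_pos rfl, zero_add,
    Finset.sum_congr rfl (fun x hx => if_neg (Finset.ne_of_mem_erase hx)),
    Finset.sum_const, smul_eq_mul, mul_one, Finset.card_erase_of_mem (Finset.mem_univ _),
    Finset.card_univ, Fintype.card_fin]

theorem stmt19 (n : ℕ) (hn : 3 ≤ n) :
    tsrd (completeBipartiteGraph (Fin 1) (Fin (n - 1))) =
      (n - 2 + 1) / 2 + 2 := by
  classical
  set G := completeBipartiteGraph (Fin 1) (Fin (n - 1)) with hG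
  have hn1 : n - 2 + 1 = n - 1 := by omega
  rw [hn1]
  set i0 : Fin (n - 1) := ⟨0, by omega⟩ with hi0
  -- adjacency facts
  have adj_cl : ∀ (j : Fin 1) (i : Fin (n - 1)), G.Adj (Sum.inl j) (Sum.inr i) := by
    intro j i; simp [hG]
  have adj_lc : ∀ (i : Fin (n - 1)) (j : Fin 1), G.Adj (Sum.inr i) (Sum.inl j) := by
    intro i j; simp [hG]
  have adj_ll : ∀ (j j' : Fin 1), ¬ G.Adj (Sum.inl j) (Sum.inl j') := by
    intro j j'; simp [hG]
  have adj_rr : ∀ (i i' : Fin (n - 1)), ¬ G.Adj (Sum.inr i) (Sum.inr i') := by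
    intro i i'; simp [hG]
  -- max degree lower bound
  have hdeg : degN G (Sum.inl 0) = n - 1 := by
    rw [degN, ncard_eq_sum', Fintype.sum_sum_type]
    have h1 : ∀ j : Fin 1, (if Sum.inl j ∈ {u | G.Adj (Sum.inl 0) u} then 1 else 0) = 0 := by
      intro j; simp [adj_ll]
    have h2 : ∀ i : Fin (n - 1), (if Sum.inr i ∈ {u | G.Adj (Sum.inl 0) u} then 1 else 0) = 1 := by
      intro i; simp [adj_cl]
    simp only [h1, h2, Finset.sum_const_zero, Finset.sum_const, smul_eq_mul, mul_one,
      Finset.card_univ, Fintype.card_fin, zero_add]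
  have hmax : n - 1 ≤ maxDeg G := by
    have := Finset.le_sup (f := degN G) (Finset.mem_univ (Sum.inl 0))
    unfold maxDeg
    omega
  -- the witness function
  set f₀ : Fin 1 ⊕ Fin (n - 1) → ℕ :=
    Sum.elim (fun _ => (n - 1) / 2 + 1) (fun i => if i = i0 then 1 else 0) with hf₀
  have hsum₀ : ∑ v, f₀ v = (n - 1) / 2 + 2 := by
    rw [Fintype.sum_sum_type]
    simp [hf₀, Finset.sum_ite_eq']
  have hZ₀ : ({w | G.Adj (Sum.inl 0) w ∧ f₀ w = 0}).ncard = n - 2 := by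
    rw [ncard_eq_sum', Fintype.sum_sum_type]
    have h1 : ∀ j : Fin 1,
        (if Sum.inl j ∈ {w | G.Adj (Sum.inl 0) w ∧ f₀ w = 0} then 1 else 0) = 0 := by
      intro j; simp [adj_ll]
    have h2 : ∀ i : Fin (n - 1),
        (if Sum.inr i ∈ {w | G.Adj (Sum.inl 0) w ∧ f₀ w = 0} then 1 else 0)
          = if i = i0 then 0 else 1 := by
      intro i
      by_cases h : i = i0 <;> simp [adj_cl, hf₀, h]
    simp only [h1, h2, Finset.sum_const_zero, zero_add]
    rw [sum_ite_ne_aux i0]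
    omega
  have hmem : (n - 1) / 2 + 2 ∈ {k | ∃ f : (Fin 1 ⊕ Fin (n - 1)) → ℕ,
      IsTSRDF G f ∧ ∑ v, f v = k} := by
    refine ⟨f₀, ⟨?_, ?_, ?_⟩, hsum₀⟩
    · intro v
      cases v with
      | inl j => simp only [hf₀, Sum.elim_inl]; omega
      | inr i =>
        simp only [hf₀, Sum.elim_inr]
        split_ifs <;> omega
    · intro v hv
      cases v with
      | inl j => simp [hf₀] at hv
      | inr i =>
        refine ⟨Sum.inl 0, adj_lc i 0, ?_⟩
        rw [hZ₀]
        simp only [hf₀, Sum.elim_inl]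
        omega
    · intro v hv
      cases v with
      | inl j =>
        exact ⟨Sum.inr i0, adj_cl j i0, by simp [hf₀]⟩
      | inr i =>
        exact ⟨Sum.inl 0, adj_lc i 0, by simp [hf₀]⟩
  rw [tsrd]
  refine le_antisymm (Nat.sInf_le hmem) ?_
  refine le_csInf ⟨_, hmem⟩ ?_
  rintro k ⟨f, ⟨hub, hzero, hpos⟩, rfl⟩
  rw [Fintype.sum_sum_type]
  have hsl : ∑ j : Fin 1, f (Sum.inl j) = f (Sum.inl 0) := by
    rw [Fin.sum_univ_one]
  rw [hsl]
  set Zf : Finset (Fin (n - 1)) := univ.filter (fun i => f (Sum.inr i) = 0) with hZf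
  have hZfcard : Zf.card ≤ n - 1 := by
    calc Zf.card ≤ Finset.univ.card := Finset.card_le_card (Finset.subset_univ _)
    _ = n - 1 := by rw [Finset.card_univ, Fintype.card_fin]
  have hleafsum : (n - 1) - Zf.card ≤ ∑ i, f (Sum.inr i) := by
    have h1 : ((univ.filter (fun i => ¬ f (Sum.inr i) = 0)).card ≤ ∑ i, f (Sum.inr i)) := by
      rw [Finset.card_filter]
      apply Finset.sum_le_sum
      intro i _
      split_ifs with h
      · omega
      · omega
    have h2 := Finset.card_filter_add_card_filter_not
      (s := (univ : Finset (Fin (n - 1)))) (p := fun i => f (Sum.inr i) = 0)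
    rw [Finset.card_univ, Fintype.card_fin] at h2
    rw [← hZf] at h2
    omega
  have hZncard : ({w | G.Adj (Sum.inl 0) w ∧ f w = 0}).ncard = Zf.card := by
    rw [ncard_eq_sum', Fintype.sum_sum_type]
    have h1 : ∀ j : Fin 1,
        (if Sum.inl j ∈ {w | G.Adj (Sum.inl 0) w ∧ f w = 0} then 1 else 0) = 0 := by
      intro j; simp [adj_ll]
    have h2 : ∀ i : Fin (n - 1),
        (if Sum.inr i ∈ {w | G.Adj (Sum.inl 0) w ∧ f w = 0} then 1 else 0)
          = if f (Sum.inr i) = 0 then 1 else 0 := by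
      intro i; by_cases h : f (Sum.inr i) = 0 <;> simp [adj_cl, h]
    simp only [h1, h2, Finset.sum_const_zero, zero_add]
    rw [hZf, Finset.card_filter]
  by_cases hZne : Zf.Nonempty
  · obtain ⟨i₁, hi₁⟩ := hZne
    rw [hZf, Finset.mem_filter] at hi₁
    obtain ⟨u, hadj, hu⟩ := hzero (Sum.inr i₁) hi₁.2
    have hu0 : u = Sum.inl 0 := by
      cases u with
      | inl j => exact congrArg Sum.inl (Subsingleton.elim j 0)
      | inr i' => exact absurd hadj (adj_rr _ _)
    subst hu0
    rw [hZncard] at hu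
    have hcpos : 0 < f (Sum.inl 0) := by omega
    obtain ⟨w, hadjw, hwpos⟩ := hpos _ hcpos
    obtain ⟨i₂, rfl⟩ : ∃ i₂, w = Sum.inr i₂ := by
      cases w with
      | inl j => exact absurd hadjw (adj_ll _ _)
      | inr i₂ => exact ⟨i₂, rfl⟩
    have hi₂ : i₂ ∉ Zf := by
      rw [hZf, Finset.mem_filter]
      push_neg
      intro _
      omega
    have hZle : Zf.card ≤ n - 2 := by
      have hsub : Zf ⊆ Finset.univ.erase i₂ := by
        intro x hx
        exact Finset.mem_erase.mpr ⟨fun h => hi₂ (h ▸ hx), Finset.mem_univ x⟩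
      have := Finset.card_le_card hsub
      rw [Finset.card_erase_of_mem (Finset.mem_univ _), Finset.card_univ,
        Fintype.card_fin] at this
      omega
    omega
  · rw [Finset.not_nonempty_iff_eq_empty] at hZne
    have hall : ∀ i, f (Sum.inr i) ≠ 0 := by
      intro i hi
      have : i ∈ Zf := by rw [hZf, Finset.mem_filter]; exact ⟨Finset.mem_univ i, hi⟩
      rw [hZne] at this
      exact absurd this (Finset.notMem_empty i)
    have hleaf1 : n - 1 ≤ ∑ i, f (Sum.inr i) := by
      have : Zf.card = 0 := by rw [hZne]; rfl
      omega
    by_cases hc : f (Sum.inl 0) = 0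
    · obtain ⟨u, hadj, hu⟩ := hzero (Sum.inl 0) hc
      obtain ⟨i₃, rfl⟩ : ∃ i₃, u = Sum.inr i₃ := by
        cases u with
        | inl j => exact absurd hadj (adj_ll _ _)
        | inr i₃ => exact ⟨i₃, rfl⟩
      have hne : 1 ≤ ({w | G.Adj (Sum.inr i₃) w ∧ f w = 0}).ncard := by
        have : ({w | G.Adj (Sum.inr i₃) w ∧ f w = 0}).Nonempty :=
          ⟨Sum.inl 0, adj_lc i₃ 0, hc⟩
        have hpos' := (Set.ncard_pos (Set.toFinite _)).mpr this
        omega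
      have hfu : 2 ≤ f (Sum.inr i₃) := by omega
      have hrest : n - 2 ≤ ∑ i ∈ Finset.univ.erase i₃, f (Sum.inr i) := by
        have h1 : (Finset.univ.erase i₃).card • 1 ≤ ∑ i ∈ Finset.univ.erase i₃, f (Sum.inr i) :=
          Finset.card_nsmul_le_sum _ _ _ (fun x _ => Nat.one_le_iff_ne_zero.mpr (hall x))
        rw [Finset.card_erase_of_mem (Finset.mem_univ _), Finset.card_univ,
          Fintype.card_fin, smul_eq_mul, mul_one] at h1
        omega
      have htot : n ≤ ∑ i, f (Sum.inr i) := by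
        have h := Finset.add_sum_erase Finset.univ (fun i => f (Sum.inr i)) (Finset.mem_univ i₃)
        beta_reduce at h ⊢
        beta_reduce at hrest
        omega
      omega
    · omega
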